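/- The function p(I) = B(L-|I|, |I|+1)/H_L, defined on proper subsets I of {1,...,L}, is a probability mass function: it is nonnegative and its values sum to 1. -/

import Mathlib

open Finset

/-- The function `p(I) = B(L-|I|, |I|+1) / H_L`, defined on proper subsets `I` of
`{1,...,L}`, is a probability mass function: nonnegative and summing to `1`. -/
theorem beta_over_harmonic_is_pmf (L : ℕ) (hL : 0 < L) :
    (∀ I : Finset (Fin L), I ≠ Finset.univ →
      0 ≤ (((I.card.factorial : ℝ) * ((L - I.card - 1).factorial : ℝ)) / (L.factorial : ℝ))
            / (∑ j ∈ Finset.range L, 1 / ((j : ℝ) + 1))) ∧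
    ∑ I ∈ Finset.univ.filter (fun I : Finset (Fin L) => I ≠ Finset.univ),
        (((I.card.factorial : ℝ) * ((L - I.card - 1).factorial : ℝ)) / (L.factorial : ℝ))
          / (∑ j ∈ Finset.range L, 1 / ((j : ℝ) + 1))
      = 1 := by
  have hHpos : 0 < ∑ j ∈ Finset.range L, 1 / ((j : ℝ) + 1) := by
    apply Finset.sum_pos (fun j _ => by positivity)
    simpa [Finset.nonempty_range_iff] using hL.ne'
  constructor
  · intro I _
    positivity
  · rw [← Finset.sum_div, div_eq_one_iff_eq hHpos.ne']
    -- sum over all subsets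
    have hall : ∑ I : Finset (Fin L),
        (((I.card.factorial : ℝ) * ((L - I.card - 1).factorial : ℝ)) / (L.factorial : ℝ))
        = (∑ j ∈ Finset.range L, 1 / ((j : ℝ) + 1)) + 1 := by
      rw [← Finset.powerset_univ, Finset.sum_powerset]
      have hcard : (Finset.univ : Finset (Fin L)).card = L := by simp
      have hstep : ∀ k ∈ Finset.range (L + 1),
          (∑ I ∈ Finset.powersetCard k (Finset.univ : Finset (Fin L)),
            (((I.card.factorial : ℝ) * ((L - I.card - 1).factorial : ℝ)) / (L.factorial : ℝ)))
          = (L.choose k : ℝ) * (((k.factorial : ℝ) * ((L - k - 1).factorial : ℝ)) / (L.factorial : ℝ)) := by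
        intro k _
        rw [Finset.sum_congr rfl (fun I hI => by
          rw [(Finset.mem_powersetCard.mp hI).2])]
        rw [Finset.sum_const, Finset.card_powersetCard, hcard, nsmul_eq_mul]
      rw [hcard, Finset.sum_congr rfl hstep, Finset.sum_range_succ]
      have hlast : (L.choose L : ℝ) * (((L.factorial : ℝ) * ((L - L - 1).factorial : ℝ)) / (L.factorial : ℝ)) = 1 := by
        have : L - L - 1 = 0 := by omega
        rw [this, Nat.choose_self, Nat.factorial_zero]
        have : (L.factorial : ℝ) ≠ 0 := by positivity
        field_simp
        norm_num
      rw [hlast]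
      congr 1
      have hterm : ∀ k ∈ Finset.range L,
          (L.choose k : ℝ) * (((k.factorial : ℝ) * ((L - k - 1).factorial : ℝ)) / (L.factorial : ℝ))
          = 1 / ((L : ℝ) - k) := by
        intro k hk
        rw [Finset.mem_range] at hk
        have h1 : L - k = (L - k - 1) + 1 := by omega
        have h2 : L.choose k * k.factorial * (L - k).factorial = L.factorial :=
          Nat.choose_mul_factorial_mul_factorial hk.le
        rw [h1, Nat.factorial_succ] at h2
        have h2' : (L.choose k : ℝ) * k.factorial * ((((L - k - 1 : ℕ) : ℝ) + 1) * (L - k - 1).factorial) = L.factorial := by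
          exact_mod_cast h2
        have hc : ((L - k - 1 : ℕ) : ℝ) + 1 = (L : ℝ) - k := by
          have : ((L - k - 1 : ℕ) : ℝ) = (L : ℝ) - k - 1 := by
            push_cast [Nat.cast_sub hk.le, Nat.cast_sub (by omega : 1 ≤ L - k)]
            ring
          rw [this]; ring
        rw [hc] at h2'
        have hLk : (0:ℝ) < (L : ℝ) - k := by
          have : (k:ℝ) < L := by exact_mod_cast hk
          linarith
        have hLf : (0:ℝ) < (L.factorial : ℝ) := by positivity
        field_simp
        nlinarith [h2']
      rw [Finset.sum_congr rfl hterm, ← Finset.sum_range_reflect]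
      apply Finset.sum_congr rfl
      intro j hj
      rw [Finset.mem_range] at hj
      congr 1
      have : ((L - 1 - j : ℕ) : ℝ) = (L:ℝ) - 1 - j := by
        push_cast [Nat.cast_sub (by omega : j ≤ L - 1), Nat.cast_sub (by omega : 1 ≤ L)]
        ring
      rw [this]; ring
    have hfilter : (Finset.univ.filter (fun I : Finset (Fin L) => I ≠ Finset.univ))
        = Finset.univ.erase (Finset.univ : Finset (Fin L)) := by
      ext I; simp [Finset.mem_erase, and_comm]
    rw [hfilter, Finset.sum_erase_eq_sub (Finset.mem_univ _), hall]
    have : L - (Finset.univ : Finset (Fin L)).card - 1 = 0 := by simp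
    rw [this]
    have hLf : (L.factorial : ℝ) ≠ 0 := by positivity
    simp [Finset.card_univ]
    field_simp
    ring
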